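/- Let H : [0,T] × ℝ^k × ℝ^k × ℝ → ℝ be C², fix t, and for r = (X,Y,Z) ∈ ℝ^k × ℝ^k × ℝ let τ ↦ φ^{t,τ}(r) = (x̄(τ,r), ȳ(τ,r), z̄(τ,r)) solve the characteristic equations with φ^{t,t}(r) = r (the flow run from time t). Suppose (s', x', Y', z') ↦ Φ^{s',t}(x', Y', z') is C¹ and for each s' in an interval the function Φ^{s',t} is a generating function for the map φ^{s',t} inverse to φ^{t,s'}. Then for r = (X,Y,Z): the partial derivative of s' ↦ Φ^{s',t}(x̄(s,r), Y, z̄(s,r)) at s' = s (with the arguments x̄(s,r), Y, z̄(s,r) held fixed) equals H(s, φ^{t,s}(r))·(∂_zΦ^{s,t}(x̄(s,r), Y, z̄(s,r)) − 1). -/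

import Mathlib

open RealInnerProductSpace Filter Topology

/-- The partial gradient of the Hamiltonian `H(t,x,y,z)` in the `x` variable. -/
noncomputable def pdx {k : ℕ}
    (H : ℝ → EuclideanSpace ℝ (Fin k) → EuclideanSpace ℝ (Fin k) → ℝ → ℝ)
    (t : ℝ) (x y : EuclideanSpace ℝ (Fin k)) (z : ℝ) : EuclideanSpace ℝ (Fin k) :=
  gradient (fun x' => H t x' y z) x

/-- The partial gradient of the Hamiltonian `H(t,x,y,z)` in the `y` variable. -/
noncomputable def pdy {k : ℕ}
    (H : ℝ → EuclideanSpace ℝ (Fin k) → EuclideanSpace ℝ (Fin k) → ℝ → ℝ)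
    (t : ℝ) (x y : EuclideanSpace ℝ (Fin k)) (z : ℝ) : EuclideanSpace ℝ (Fin k) :=
  gradient (fun y' => H t x y' z) y

/-- The partial derivative of the Hamiltonian `H(t,x,y,z)` in the `z` variable. -/
noncomputable def pdz {k : ℕ}
    (H : ℝ → EuclideanSpace ℝ (Fin k) → EuclideanSpace ℝ (Fin k) → ℝ → ℝ)
    (t : ℝ) (x y : EuclideanSpace ℝ (Fin k)) (z : ℝ) : ℝ :=
  deriv (fun z' => H t x y z') z

/-- The curve `τ ↦ (x τ, y τ, z τ)` solves the characteristic equations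
`ẋ = ∂_yH`, `ẏ = −∂_xH − (∂_zH) y`, `ż = ⟨y, ∂_yH⟩ − H` on the set `I`. -/
def IsCharSol {k : ℕ}
    (H : ℝ → EuclideanSpace ℝ (Fin k) → EuclideanSpace ℝ (Fin k) → ℝ → ℝ)
    (I : Set ℝ) (x y : ℝ → EuclideanSpace ℝ (Fin k)) (z : ℝ → ℝ) : Prop :=
  ∀ τ ∈ I,
    HasDerivAt x (pdy H τ (x τ) (y τ) (z τ)) τ ∧
    HasDerivAt y (-pdx H τ (x τ) (y τ) (z τ) - pdz H τ (x τ) (y τ) (z τ) • y τ) τ ∧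
    HasDerivAt z (⟪y τ, pdy H τ (x τ) (y τ) (z τ)⟫ - H τ (x τ) (y τ) (z τ)) τ

/-- `Φ(x,Y,z)` is a generating function for the contactomorphism `φ`. -/
def IsGenFun {k : ℕ}
    (Φ : EuclideanSpace ℝ (Fin k) → EuclideanSpace ℝ (Fin k) → ℝ → ℝ)
    (φ : EuclideanSpace ℝ (Fin k) × EuclideanSpace ℝ (Fin k) × ℝ →
      EuclideanSpace ℝ (Fin k) × EuclideanSpace ℝ (Fin k) × ℝ) : Prop :=
  (∀ x Y z, 1 - deriv (fun z' => Φ x Y z') z ≠ 0) ∧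
  ∀ x y z X Y Z,
    (X - x = gradient (fun Y' => Φ x Y' z) Y ∧
      Y - y = -gradient (fun x' => Φ x' Y z) x - deriv (fun z' => Φ x Y z') z • y ∧
      Z - z = ⟪Y, X - x⟫ - Φ x Y z)
    ↔ φ (x, y, z) = (X, Y, Z)

/-- Let `τ ↦ (X̄ r τ, Ȳ r τ, Z̄ r τ)` be the characteristic flow run
from time `t` with value `r` at time `t`, and let `Φ^{s',t}` be a `C¹` family of
generating functions for the maps `φ^{s',t}` inverse to `φ^{t,s'}`, for `s'` in an
interval around `s`.  Then
`∂_{s'} Φ^{s',t}(x̄(s,r), Y, z̄(s,r)) |_{s'=s}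
  = H(s, φ^{t,s}(r)) ⋅ (∂_zΦ^{s,t}(x̄(s,r), Y, z̄(s,r)) − 1)`. -/
theorem generating_function_initial_time_derivative {k : ℕ} (s t α β : ℝ)
    (hαs : α < s) (hsβ : s < β) (hβt : β ≤ t)
    (H : ℝ → EuclideanSpace ℝ (Fin k) → EuclideanSpace ℝ (Fin k) → ℝ → ℝ)
    (hH : ContDiff ℝ 2 fun p : ℝ × EuclideanSpace ℝ (Fin k) × EuclideanSpace ℝ (Fin k) × ℝ =>
      H p.1 p.2.1 p.2.2.1 p.2.2.2)
    (Xb Yb : EuclideanSpace ℝ (Fin k) × EuclideanSpace ℝ (Fin k) × ℝ → ℝ →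
      EuclideanSpace ℝ (Fin k))
    (Zb : EuclideanSpace ℝ (Fin k) × EuclideanSpace ℝ (Fin k) × ℝ → ℝ → ℝ)
    (hinit : ∀ r, Xb r t = r.1 ∧ Yb r t = r.2.1 ∧ Zb r t = r.2.2)
    (hflow : ∀ r, IsCharSol H (Set.Icc α t) (Xb r) (Yb r) (Zb r))
    (Φ : ℝ → EuclideanSpace ℝ (Fin k) → EuclideanSpace ℝ (Fin k) → ℝ → ℝ)
    (hΦC1 : ContDiff ℝ 1
      fun p : ℝ × EuclideanSpace ℝ (Fin k) × EuclideanSpace ℝ (Fin k) × ℝ =>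
        Φ p.1 p.2.1 p.2.2.1 p.2.2.2)
    (ψ : ℝ → EuclideanSpace ℝ (Fin k) × EuclideanSpace ℝ (Fin k) × ℝ →
      EuclideanSpace ℝ (Fin k) × EuclideanSpace ℝ (Fin k) × ℝ)
    (hψinv : ∀ s' ∈ Set.Ioo α β,
      Function.LeftInverse (ψ s') (fun r => (Xb r s', Yb r s', Zb r s')) ∧
      Function.RightInverse (ψ s') (fun r => (Xb r s', Yb r s', Zb r s')))
    (hΦgen : ∀ s' ∈ Set.Ioo α β, IsGenFun (Φ s') (ψ s')) :
    ∀ r : EuclideanSpace ℝ (Fin k) × EuclideanSpace ℝ (Fin k) × ℝ,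
      deriv (fun s' => Φ s' (Xb r s) r.2.1 (Zb r s)) s =
        H s (Xb r s) (Yb r s) (Zb r s) *
          (deriv (fun z' => Φ s (Xb r s) r.2.1 z') (Zb r s) - 1) := by
  intro r
  have hsmem : s ∈ Set.Ioo α β := ⟨hαs, hsβ⟩
  have hsIcc : s ∈ Set.Icc α t := ⟨hαs.le, hsβ.le.trans hβt⟩
  obtain ⟨hX, hYd, hZ⟩ := hflow r s hsIcc
  set x := Xb r s with hx
  set y := Yb r s with hy
  set z := Zb r s with hz
  set Y := r.2.1 with hYdef
  set vX := pdy H s x y z with hvX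
  set vZ := (⟪y, vX⟫ - H s x y z) with hvZ
  -- generating function relations along the flow
  have hψ : ∀ s' ∈ Set.Ioo α β, ψ s' (Xb r s', Yb r s', Zb r s') = (r.1, Y, r.2.2) := by
    intro s' hs'
    have h := (hψinv s' hs').1 r
    simpa using h
  have hfun : ∀ s' ∈ Set.Ioo α β,
      Φ s' (Xb r s') Y (Zb r s') = ⟪Y, r.1 - Xb r s'⟫ - r.2.2 + Zb r s' := by
    intro s' hs'
    have h3 := (((hΦgen s' hs').2 (Xb r s') (Yb r s') (Zb r s') r.1 Y r.2.2).mpr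
      (hψ s' hs')).2.2
    linarith
  obtain ⟨hg1, hg2, hg3⟩ :=
    ((hΦgen s hsmem).2 x y z r.1 Y r.2.2).mpr (hψ s hsmem)
  -- derivative of the explicit formula
  have hGexp : HasDerivAt (fun s' => ⟪Y, r.1 - Xb r s'⟫ - r.2.2 + Zb r s')
      (-⟪Y, vX⟫ + vZ) s := by
    have h1 : HasDerivAt (fun s' => r.1 - Xb r s') (0 - vX) s :=
      (hasDerivAt_const s r.1).sub hX
    have h2 := (HasDerivAt.inner ℝ (hasDerivAt_const s Y) h1)
    have h3 := (h2.sub (hasDerivAt_const s r.2.2)).add hZ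
    have e : -⟪Y, vX⟫ + vZ = ⟪Y, 0 - vX⟫ + ⟪0, r.1 - Xb r s⟫ - 0 + vZ := by
      simp [inner_sub_right]
    rw [e]; exact h3
  have hGev : (fun s' => Φ s' (Xb r s') Y (Zb r s'))
      =ᶠ[𝓝 s] (fun s' => ⟪Y, r.1 - Xb r s'⟫ - r.2.2 + Zb r s') := by
    filter_upwards [Ioo_mem_nhds hαs hsβ] with s' hs' using hfun s' hs'
  have hG : HasDerivAt (fun s' => Φ s' (Xb r s') Y (Zb r s')) (-⟪Y, vX⟫ + vZ) s :=
    hGexp.congr_of_eventuallyEq hGev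
  -- chain rule side
  set f := (fun p : ℝ × EuclideanSpace ℝ (Fin k) × EuclideanSpace ℝ (Fin k) × ℝ =>
    Φ p.1 p.2.1 p.2.2.1 p.2.2.2) with hf
  have hfd : Differentiable ℝ f := hΦC1.differentiable one_ne_zero
  set p : ℝ × EuclideanSpace ℝ (Fin k) × EuclideanSpace ℝ (Fin k) × ℝ := (s, x, Y, z) with hp
  set L := fderiv ℝ f p with hL
  have hLp : HasFDerivAt f L p := (hfd p).hasFDerivAt
  have hgc : HasDerivAt (fun s' => ((s' : ℝ), Xb r s', Y, Zb r s'))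
      ((1:ℝ), vX, (0 : EuclideanSpace ℝ (Fin k)), vZ) s :=
    (hasDerivAt_id s).prodMk (hX.prodMk ((hasDerivAt_const s Y).prodMk hZ))
  have hG2 : HasDerivAt (fun s' => Φ s' (Xb r s') Y (Zb r s'))
      (L ((1:ℝ), vX, (0 : EuclideanSpace ℝ (Fin k)), vZ)) s :=
    by have := hLp.comp_hasDerivAt s hgc; exact this
  have key : L ((1:ℝ), vX, (0 : EuclideanSpace ℝ (Fin k)), vZ) = -⟪Y, vX⟫ + vZ :=
    hG2.unique hG
  -- partial derivative in s'
  have hc1 : HasDerivAt (fun s' : ℝ => ((s' : ℝ), x, Y, z))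
      ((1:ℝ), (0 : EuclideanSpace ℝ (Fin k)), (0 : EuclideanSpace ℝ (Fin k)), (0:ℝ)) s :=
    (hasDerivAt_id s).prodMk ((hasDerivAt_const _ _).prodMk
      ((hasDerivAt_const _ _).prodMk (hasDerivAt_const _ _)))
  have h1 : HasDerivAt (fun s' => Φ s' x Y z)
      (L ((1:ℝ), (0 : EuclideanSpace ℝ (Fin k)), (0 : EuclideanSpace ℝ (Fin k)), (0:ℝ))) s :=
    by have := hLp.comp_hasDerivAt s hc1; exact this
  -- partial derivative in z
  have hc3 : HasDerivAt (fun z' : ℝ => ((s : ℝ), x, Y, z'))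
      ((0:ℝ), (0 : EuclideanSpace ℝ (Fin k)), (0 : EuclideanSpace ℝ (Fin k)), (1:ℝ)) z :=
    (hasDerivAt_const _ _).prodMk ((hasDerivAt_const _ _).prodMk
      ((hasDerivAt_const _ _).prodMk (hasDerivAt_id z)))
  have h3 : HasDerivAt (fun z' => Φ s x Y z')
      (L ((0:ℝ), (0 : EuclideanSpace ℝ (Fin k)), (0 : EuclideanSpace ℝ (Fin k)), (1:ℝ))) z :=
    by have := hLp.comp_hasDerivAt z hc3; exact this
  have hdz : deriv (fun z' => Φ s x Y z') z
      = L ((0:ℝ), (0 : EuclideanSpace ℝ (Fin k)), (0 : EuclideanSpace ℝ (Fin k)), (1:ℝ)) :=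
    h3.deriv
  -- partial gradient in x
  set M : EuclideanSpace ℝ (Fin k) →L[ℝ]
      ℝ × EuclideanSpace ℝ (Fin k) × EuclideanSpace ℝ (Fin k) × ℝ :=
    (0 : EuclideanSpace ℝ (Fin k) →L[ℝ] ℝ).prod
      ((ContinuousLinearMap.id ℝ (EuclideanSpace ℝ (Fin k))).prod
        ((0 : EuclideanSpace ℝ (Fin k) →L[ℝ] EuclideanSpace ℝ (Fin k)).prod
          (0 : EuclideanSpace ℝ (Fin k) →L[ℝ] ℝ))) with hM
  have hc2 : HasFDerivAt (fun x' : EuclideanSpace ℝ (Fin k) => ((s : ℝ), x', Y, z)) M x :=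
    (hasFDerivAt_const _ _).prodMk ((hasFDerivAt_id _).prodMk
      ((hasFDerivAt_const _ _).prodMk (hasFDerivAt_const _ _)))
  have h2 : HasFDerivAt (fun x' => Φ s x' Y z) (L.comp M) x := by have := hLp.comp x hc2; exact this
  have hgx : gradient (fun x' => Φ s x' Y z) x
      = (InnerProductSpace.toDual ℝ (EuclideanSpace ℝ (Fin k))).symm (L.comp M) :=
    h2.hasGradientAt.gradient
  have hinner : ∀ v : EuclideanSpace ℝ (Fin k),
      ⟪gradient (fun x' => Φ s x' Y z) x, v⟫
        = L ((0:ℝ), v, (0 : EuclideanSpace ℝ (Fin k)), (0:ℝ)) := by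
    intro v
    rw [hgx, InnerProductSpace.toDual_symm_apply]
    simp [hM]
  -- decompose the direction
  have hsplit : L ((1:ℝ), vX, (0 : EuclideanSpace ℝ (Fin k)), vZ)
      = L ((1:ℝ), (0 : EuclideanSpace ℝ (Fin k)), (0 : EuclideanSpace ℝ (Fin k)), (0:ℝ))
        + L ((0:ℝ), vX, (0 : EuclideanSpace ℝ (Fin k)), (0:ℝ))
        + vZ * L ((0:ℝ), (0 : EuclideanSpace ℝ (Fin k)), (0 : EuclideanSpace ℝ (Fin k)), (1:ℝ)) := by
    have e1 : ((1:ℝ), vX, (0 : EuclideanSpace ℝ (Fin k)), vZ)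
        = ((1:ℝ), (0 : EuclideanSpace ℝ (Fin k)), (0 : EuclideanSpace ℝ (Fin k)), (0:ℝ))
          + ((0:ℝ), vX, (0 : EuclideanSpace ℝ (Fin k)), (0:ℝ))
          + vZ • ((0:ℝ), (0 : EuclideanSpace ℝ (Fin k)), (0 : EuclideanSpace ℝ (Fin k)), (1:ℝ)) := by
      simp [Prod.ext_iff]
    rw [e1, map_add, map_add, map_smul]
    simp [smul_eq_mul]
  -- the gradient identity from the generating function
  set dz := deriv (fun z' => Φ s x Y z') z with hdzdef
  set gx := gradient (fun x' => Φ s x' Y z) x with hgxdef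
  have hgx2 : gx = y - Y - dz • y := by
    have h' : gx = -(Y - y) - dz • y := by rw [hg2]; abel
    rw [h']; abel
  have hinnerX : ⟪gx, vX⟫ = ⟪y, vX⟫ - ⟪Y, vX⟫ - dz * ⟪y, vX⟫ := by
    rw [hgx2, inner_sub_left, inner_sub_left, real_inner_smul_left]
  -- put it all together
  have hL1 : L ((1:ℝ), (0 : EuclideanSpace ℝ (Fin k)), (0 : EuclideanSpace ℝ (Fin k)), (0:ℝ))
      = -⟪Y, vX⟫ + vZ - ⟪gx, vX⟫ - vZ * dz := by
    have h2' := hinner vX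
    rw [hsplit, ← h2', ← hdz] at key
    linarith
  have hderiv : deriv (fun s' => Φ s' x Y z) s
      = -⟪Y, vX⟫ + vZ - ⟪gx, vX⟫ - vZ * dz := by rw [h1.deriv, hL1]
  rw [hderiv, hinnerX, hvZ]
  ring
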